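/- For a matrix B satisfying the (s, δ)-RIP, and for any two s/2-sparse vectors u, v with disjoint supports (s even), the inner product satisfies |⟨Bu, Bv⟩| ≤ δ‖u‖₂‖v‖₂. -/

import Mathlib

open Matrix BigOperators

/-- `x` is `s`-sparse: it has at most `s` nonzero entries. -/
def Sparse {κ : Type*} (s : ℕ) (x : κ → ℝ) : Prop :=
  (Function.support x).ncard ≤ s

/-- `B` satisfies the `(s, δ)`-restricted isometry property. -/
def RIP {ι κ : Type*} [Fintype ι] [Fintype κ] (B : Matrix ι κ ℝ) (s : ℕ) (δ : ℝ) : Prop :=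
  ∀ x : κ → ℝ, Sparse s x →
    (1 - δ) * (∑ j, x j ^ 2) ≤ (∑ i, (B.mulVec x) i ^ 2) ∧
    (∑ i, (B.mulVec x) i ^ 2) ≤ (1 + δ) * (∑ j, x j ^ 2)


/-- Under the (s, δ)-RIP with s even, for s/2-sparse u, v with disjoint supports,
|⟨Bu, Bv⟩| ≤ δ‖u‖₂‖v‖₂. -/

private lemma sq_sum_expand {κ : Type*} [Fintype κ] (f g : κ → ℝ) (c d : ℝ) :
    ∑ j, (c * f j + d * g j)^2
      = c^2 * (∑ j, (f j)^2) + d^2 * (∑ j, (g j)^2) + 2*c*d*(∑ j, f j * g j) := by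
  rw [Finset.mul_sum, Finset.mul_sum, Finset.mul_sum, ← Finset.sum_add_distrib,
    ← Finset.sum_add_distrib]
  exact Finset.sum_congr rfl fun j _ => by ring

theorem stmt9 {m n : ℕ} (B : Matrix (Fin m) (Fin n) ℝ) (s : ℕ) (δ : ℝ)
    (hs : Even s) (hRIP : RIP B s δ)
    (u v : Fin n → ℝ) (hu : Sparse (s / 2) u) (hv : Sparse (s / 2) v)
    (hdisj : Disjoint (Function.support u) (Function.support v)) :
    |∑ i, (B.mulVec u) i * (B.mulVec v) i| ≤
      δ * Real.sqrt (∑ j, (u j) ^ 2) * Real.sqrt (∑ j, (v j) ^ 2) := by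
  obtain ⟨r, rfl⟩ := hs
  have hdiv : (r + r) / 2 = r := by omega
  rw [hdiv] at hu hv
  have hAnn : (0:ℝ) ≤ ∑ j, (u j)^2 := Finset.sum_nonneg fun j _ => sq_nonneg _
  have hBnn : (0:ℝ) ≤ ∑ j, (v j)^2 := Finset.sum_nonneg fun j _ => sq_nonneg _
  set a := Real.sqrt (∑ j, (u j)^2) with ha
  set b := Real.sqrt (∑ j, (v j)^2) with hb
  have ha2 : a^2 = ∑ j, (u j)^2 := Real.sq_sqrt hAnn
  have hb2 : b^2 = ∑ j, (v j)^2 := Real.sq_sqrt hBnn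
  have hcross : ∑ j, u j * v j = 0 := by
    apply Finset.sum_eq_zero
    intro j _
    by_cases hj : u j = 0
    · simp [hj]
    · have hjv : j ∉ Function.support v := Set.disjoint_left.mp hdisj hj
      simp [Function.notMem_support.mp hjv]
  -- degenerate cases
  by_cases ha0 : a = 0
  · have huz : ∀ j, u j = 0 := by
      intro j
      have h0 : ∑ j, (u j)^2 = 0 := by rw [← ha2, ha0]; ring
      have := (Finset.sum_eq_zero_iff_of_nonneg (fun j _ => sq_nonneg (u j))).mp h0 j
        (Finset.mem_univ j)
      exact pow_eq_zero_iff (n := 2) (by norm_num) |>.mp this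
    have : ∀ i, B.mulVec u i = 0 := by
      intro i
      simp only [Matrix.mulVec, dotProduct]
      exact Finset.sum_eq_zero fun j _ => by simp [huz j]
    simp [this, ha0]
  by_cases hb0 : b = 0
  · have hvz : ∀ j, v j = 0 := by
      intro j
      have h0 : ∑ j, (v j)^2 = 0 := by rw [← hb2, hb0]; ring
      have := (Finset.sum_eq_zero_iff_of_nonneg (fun j _ => sq_nonneg (v j))).mp h0 j
        (Finset.mem_univ j)
      exact pow_eq_zero_iff (n := 2) (by norm_num) |>.mp this
    have : ∀ i, B.mulVec v i = 0 := by
      intro i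
      simp only [Matrix.mulVec, dotProduct]
      exact Finset.sum_eq_zero fun j _ => by simp [hvz j]
    simp [this, hb0]
  have hapos : 0 < a := lt_of_le_of_ne (Real.sqrt_nonneg _) (Ne.symm ha0)
  have hbpos : 0 < b := lt_of_le_of_ne (Real.sqrt_nonneg _) (Ne.symm hb0)
  -- sparsity of combinations
  have hsparse : ∀ c d : ℝ, Sparse (r + r) (fun j => c * u j + d * v j) := by
    intro c d
    have hsub : Function.support (fun j => c * u j + d * v j) ⊆
        Function.support u ∪ Function.support v := by
      intro j hj
      by_contra h
      simp only [Set.mem_union, Function.mem_support, not_or, not_not] at h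
      exact hj (by simp [h.1, h.2])
    calc (Function.support (fun j => c * u j + d * v j)).ncard
        ≤ (Function.support u ∪ Function.support v).ncard :=
          Set.ncard_le_ncard hsub (Set.toFinite _)
      _ ≤ (Function.support u).ncard + (Function.support v).ncard :=
          Set.ncard_union_le _ _
      _ ≤ r + r := Nat.add_le_add hu hv
  -- mulVec linearity pointwise
  have hmv : ∀ (c d : ℝ) (i), B.mulVec (fun j => c * u j + d * v j) i
      = c * B.mulVec u i + d * B.mulVec v i := by
    intro c d i
    simp only [Matrix.mulVec, dotProduct]
    rw [Finset.mul_sum, Finset.mul_sum, ← Finset.sum_add_distrib]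
    exact Finset.sum_congr rfl fun j _ => by ring
  set P := ∑ i, (B.mulVec u) i * (B.mulVec v) i with hP
  set F := ∑ i, (B.mulVec u i)^2 with hF
  set G := ∑ i, (B.mulVec v i)^2 with hG
  have himg : ∀ c d : ℝ, ∑ i, (B.mulVec (fun j => c * u j + d * v j) i)^2
      = c^2 * F + d^2 * G + 2*c*d*P := by
    intro c d
    calc ∑ i, (B.mulVec (fun j => c * u j + d * v j) i)^2
        = ∑ i, (c * B.mulVec u i + d * B.mulVec v i)^2 := by
          exact Finset.sum_congr rfl fun i _ => by rw [hmv]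
      _ = c^2 * F + d^2 * G + 2*c*d*P := sq_sum_expand _ _ c d
  have hdom : ∀ c d : ℝ, ∑ j, ((fun j => c * u j + d * v j) j)^2
      = c^2 * a^2 + d^2 * b^2 + 2*c*d*(∑ j, u j * v j) := by
    intro c d
    rw [ha2, hb2]; exact sq_sum_expand u v c d
  have h1 := hRIP (fun j => b * u j + a * v j) (hsparse b a)
  have h2 := hRIP (fun j => b * u j + (-a) * v j) (hsparse b (-a))
  rw [himg, hdom, hcross] at h1
  rw [himg, hdom, hcross] at h2
  have key1 : 4 * (a*b) * P ≤ 4 * δ * (a^2 * b^2) := by nlinarith [h1.2, h2.1]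
  have key2 : -(4 * (a*b) * P) ≤ 4 * δ * (a^2 * b^2) := by nlinarith [h1.1, h2.2]
  rw [abs_le]
  constructor
  · nlinarith [mul_pos hapos hbpos]
  · nlinarith [mul_pos hapos hbpos]
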